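/- There is an absolute constant C such that for every R > 0, \int_{R^3} (1 + |(x,y)|/R)^{-2} (1 + |(y,z)|/R)^{-2} dx dy dz <= C R^3, where |(u,v)| denotes the Euclidean norm of (u,v) in R^2. Consequently, if two functions p_1, p_2 on R^3 satisfy |p_i(w)| <= R^{-1}(1 + dist(w, T_i)/R)^{-2} for tubes T_1 parallel to the z-axis and T_2 parallel to the x-axis, each of radius R and passing through the origin, then \int_{R^3} |p_1 p_2| <= C' R for an absolute constant C'. -/

import Mathlib

open MeasureTheory Set
open scoped ENNReal

noncomputable section

open Filter in
private lemma s14_int_Ioi (c : ℝ) (hc : 0 < c) :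
    IntegrableOn (fun x : ℝ => ((x + c) ^ 2)⁻¹) (Ioi 0) ∧
    ∫ x in Ioi (0:ℝ), ((x + c) ^ 2)⁻¹ = c⁻¹ := by
  have hderiv : ∀ x ∈ Ici (0:ℝ), HasDerivAt (fun t : ℝ => -(t + c)⁻¹) (((x + c) ^ 2)⁻¹) x := by
    intro x hx
    have hx0 : x + c ≠ 0 := by have := hx.out; positivity
    have h1 : HasDerivAt (fun t : ℝ => t + c) 1 x := (hasDerivAt_id x).add_const c
    have h2 : HasDerivAt (fun t : ℝ => -(t + c)⁻¹) (-(-1 / (x + c) ^ 2)) x := (h1.inv hx0).neg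
    convert h2 using 1
    ring
  have hpos : ∀ x ∈ Ioi (0:ℝ), 0 ≤ ((x + c) ^ 2)⁻¹ := fun x _ => by positivity
  have htend : Tendsto (fun t : ℝ => -(t + c)⁻¹) atTop (nhds 0) := by
    rw [show (0:ℝ) = -0 by ring]
    exact ((tendsto_atTop_add_const_right atTop c tendsto_id).inv_tendsto_atTop).neg
  refine ⟨integrableOn_Ioi_deriv_of_nonneg' hderiv hpos htend, ?_⟩
  rw [integral_Ioi_of_hasDerivAt_of_nonneg' hderiv hpos htend]
  simp

private lemma s14_lint_abs (c : ℝ) (hc : 0 < c) :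
    ∫⁻ x : ℝ, ENNReal.ofReal (((|x| + c) ^ 2)⁻¹) = ENNReal.ofReal (2 / c) := by
  obtain ⟨hint, hval⟩ := s14_int_Ioi c hc
  have hIic : IntegrableOn (fun x : ℝ => ((|x| + c) ^ 2)⁻¹) (Iic 0) := by
    rw [← Measure.map_neg_eq_self (volume : Measure ℝ)]
    have m : MeasurableEmbedding fun x : ℝ => -x := (Homeomorph.neg ℝ).measurableEmbedding
    rw [m.integrableOn_map_iff]
    simp_rw [Function.comp_def, abs_neg, neg_preimage, neg_Iic, neg_zero]
    refine (Iff.mpr integrableOn_Ici_iff_integrableOn_Ioi ?_)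
    exact hint.congr_fun (fun x hx => by rw [abs_of_pos hx.out]) measurableSet_Ioi
  have hIoi : IntegrableOn (fun x : ℝ => ((|x| + c) ^ 2)⁻¹) (Ioi 0) :=
    hint.congr_fun (fun x hx => by rw [abs_of_pos hx.out]) measurableSet_Ioi
  have hInt : Integrable (fun x : ℝ => ((|x| + c) ^ 2)⁻¹) := by
    rw [← integrableOn_univ, ← Iic_union_Ioi (a := (0:ℝ))]
    exact hIic.union hIoi
  rw [← ofReal_integral_eq_lintegral_ofReal hInt
    (Filter.Eventually.of_forall fun x => by positivity)]
  congr 1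
  have := integral_comp_abs (f := fun t : ℝ => ((t + c) ^ 2)⁻¹)
  rw [this, hval]
  field_simp

private lemma s14_sqrt_half (x b : ℝ) :
    (|x| + |b|) / Real.sqrt 2 ≤ Real.sqrt (x ^ 2 + b ^ 2) := by
  rw [div_le_iff₀ (by positivity), ← Real.sqrt_mul (by positivity),
    Real.le_sqrt (by positivity) (by positivity)]
  nlinarith [sq_abs x, sq_abs b, sq_nonneg (|x| - |b|)]

private lemma s14_pt_bound (R x b : ℝ) (hR : 0 < R) :
    ((1 + Real.sqrt (x ^ 2 + b ^ 2) / R) ^ (2:ℕ))⁻¹ ≤ 2 * R ^ 2 * ((|x| + (|b| + R)) ^ 2)⁻¹ := by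
  have hs := s14_sqrt_half x b
  have hs0 : 0 ≤ Real.sqrt (x ^ 2 + b ^ 2) := Real.sqrt_nonneg _
  have h2 : Real.sqrt 2 * Real.sqrt 2 = 2 := Real.mul_self_sqrt (by norm_num)
  have h2n : (1:ℝ) ≤ Real.sqrt 2 := by nlinarith [Real.sqrt_nonneg 2]
  have key : (|x| + (|b| + R)) ^ 2 ≤ 2 * R ^ 2 * (1 + Real.sqrt (x ^ 2 + b ^ 2) / R) ^ 2 := by
    have h1 : |x| + (|b| + R) ≤ Real.sqrt 2 * R * (1 + Real.sqrt (x ^ 2 + b ^ 2) / R) := by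
      have : Real.sqrt 2 * R * (1 + Real.sqrt (x ^ 2 + b ^ 2) / R)
          = Real.sqrt 2 * R + Real.sqrt 2 * Real.sqrt (x ^ 2 + b ^ 2) := by field_simp
      rw [this]
      have h3 : |x| + |b| ≤ Real.sqrt 2 * Real.sqrt (x ^ 2 + b ^ 2) := by
        rw [div_le_iff₀ (by positivity)] at hs; linarith [hs]
      nlinarith [abs_nonneg x, abs_nonneg b]
    have hpos : 0 ≤ |x| + (|b| + R) := by positivity
    calc (|x| + (|b| + R)) ^ 2 ≤ (Real.sqrt 2 * R * (1 + Real.sqrt (x ^ 2 + b ^ 2) / R)) ^ 2 :=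
          pow_le_pow_left₀ hpos h1 2
      _ = 2 * R ^ 2 * (1 + Real.sqrt (x ^ 2 + b ^ 2) / R) ^ 2 := by
          rw [mul_pow, mul_pow]; rw [show Real.sqrt 2 ^ 2 = 2 by rw [sq]; exact h2]
  have hA : (0:ℝ) < (1 + Real.sqrt (x ^ 2 + b ^ 2) / R) ^ 2 := by positivity
  have hB : (0:ℝ) < (|x| + (|b| + R)) ^ 2 := by positivity
  rw [show (2:ℝ) * R ^ 2 * ((|x| + (|b| + R)) ^ 2)⁻¹ = 2 * R ^ 2 / ((|x| + (|b| + R)) ^ 2) by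
      ring,
    show (((1 + Real.sqrt (x ^ 2 + b ^ 2) / R) ^ (2:ℕ))⁻¹ : ℝ)
      = 1 / ((1 + Real.sqrt (x ^ 2 + b ^ 2) / R) ^ 2) by ring,
    div_le_div_iff₀ hA hB]
  nlinarith

private lemma s14_key1d (R b : ℝ) (hR : 0 < R) :
    ∫⁻ x : ℝ, ENNReal.ofReal (((1 + Real.sqrt (x ^ 2 + b ^ 2) / R) ^ (2:ℕ))⁻¹)
      ≤ ENNReal.ofReal (4 * R ^ 2 / (|b| + R)) := by
  have hc : 0 < |b| + R := by positivity
  calc ∫⁻ x : ℝ, ENNReal.ofReal (((1 + Real.sqrt (x ^ 2 + b ^ 2) / R) ^ (2:ℕ))⁻¹)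
      ≤ ∫⁻ x : ℝ, ENNReal.ofReal (2 * R ^ 2 * ((|x| + (|b| + R)) ^ 2)⁻¹) :=
        lintegral_mono fun x => ENNReal.ofReal_le_ofReal (s14_pt_bound R x b hR)
    _ = ENNReal.ofReal (2 * R ^ 2) * ∫⁻ x : ℝ, ENNReal.ofReal (((|x| + (|b| + R)) ^ 2)⁻¹) := by
        simp_rw [ENNReal.ofReal_mul (show (0:ℝ) ≤ 2 * R ^ 2 by positivity)]
        exact lintegral_const_mul' _ _ ENNReal.ofReal_ne_top
    _ = ENNReal.ofReal (2 * R ^ 2) * ENNReal.ofReal (2 / (|b| + R)) := by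
        rw [s14_lint_abs _ hc]
    _ = ENNReal.ofReal (4 * R ^ 2 / (|b| + R)) := by
        rw [← ENNReal.ofReal_mul (by positivity)]
        congr 1; field_simp; ring

private lemma s14_core (R : ℝ) (hR : 0 < R) :
    ∫⁻ w : EuclideanSpace ℝ (Fin 3),
        ENNReal.ofReal
          (((1 + Real.sqrt ((w 0) ^ 2 + (w 1) ^ 2) / R) ^ (2 : ℕ))⁻¹ *
            ((1 + Real.sqrt ((w 1) ^ 2 + (w 2) ^ 2) / R) ^ (2 : ℕ))⁻¹) ≤
      ENNReal.ofReal (32 * R ^ 3) := by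
  set f : EuclideanSpace ℝ (Fin 3) → ℝ≥0∞ := fun w =>
    ENNReal.ofReal
      (((1 + Real.sqrt ((w 0) ^ 2 + (w 1) ^ 2) / R) ^ (2 : ℕ))⁻¹ *
        ((1 + Real.sqrt ((w 1) ^ 2 + (w 2) ^ 2) / R) ^ (2 : ℕ))⁻¹) with hf
  have hmeas : Measurable f := by
    apply ENNReal.measurable_ofReal.comp
    apply Measurable.mul
    all_goals
      apply Measurable.inv
      apply Measurable.pow_const
      apply Measurable.add measurable_const
      apply Measurable.div_const
      apply (Real.continuous_sqrt.measurable).comp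
      exact (by fun_prop)
  have e1 := (EuclideanSpace.volume_preserving_symm_measurableEquiv_toLp (Fin 3)).symm
  have e2 := (volume_preserving_piFinSuccAbove (fun _ : Fin 3 => ℝ) 0).symm
  have e3 := (volume_preserving_finTwoArrow ℝ).symm
  set φ : ℝ × (ℝ × ℝ) → EuclideanSpace ℝ (Fin 3) := fun p =>
    (MeasurableEquiv.toLp 2 (Fin 3 → ℝ))
      ((MeasurableEquiv.piFinSuccAbove (fun _ : Fin 3 => ℝ) 0).symm
        (p.1, (MeasurableEquiv.finTwoArrow (α := ℝ)).symm p.2)) with hφdef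
  have hφ : MeasurePreserving φ volume volume :=
    e1.comp (e2.comp ((MeasurePreserving.id volume).prod e3))
  have hcoord : ∀ p : ℝ × (ℝ × ℝ), (φ p) 0 = p.1 ∧ (φ p) 1 = p.2.1 ∧ (φ p) 2 = p.2.2 := by
    intro p
    refine ⟨rfl, rfl, rfl⟩
  set g : ℝ → ℝ → ℝ≥0∞ := fun a b =>
    ENNReal.ofReal (((1 + Real.sqrt (a ^ 2 + b ^ 2) / R) ^ (2:ℕ))⁻¹) with hg
  have hgmeas : Measurable (fun q : ℝ × ℝ => g q.1 q.2) := by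
    apply ENNReal.measurable_ofReal.comp
    apply Measurable.inv
    apply Measurable.pow_const
    apply Measurable.add measurable_const
    apply Measurable.div_const
    exact (Real.continuous_sqrt.measurable).comp
      ((measurable_fst.pow_const 2).add (measurable_snd.pow_const 2))
  have hgtop : ∀ a b, g a b ≠ ⊤ := fun a b => ENNReal.ofReal_ne_top
  set G : ℝ → ℝ≥0∞ := fun b => ENNReal.ofReal (4 * R ^ 2 / (|b| + R)) with hG
  have hGtop : ∀ b, G b ≠ ⊤ := fun b => ENNReal.ofReal_ne_top
  have hkey : ∀ b : ℝ, ∫⁻ x : ℝ, g x b ≤ G b := fun b => s14_key1d R b hR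
  have step1 : ∫⁻ w, f w = ∫⁻ p : ℝ × (ℝ × ℝ), g p.1 p.2.1 * g p.2.1 p.2.2 := by
    rw [← hφ.lintegral_comp hmeas]
    refine lintegral_congr fun p => ?_
    have h0 := (hcoord p).1
    have h1 := (hcoord p).2.1
    have h2 := (hcoord p).2.2
    simp only [hf, h0, h1, h2, hg]
    rw [ENNReal.ofReal_mul (by positivity)]
  have hFmeas : Measurable (fun p : ℝ × (ℝ × ℝ) => g p.1 p.2.1 * g p.2.1 p.2.2) := by
    exact (hgmeas.comp (measurable_fst.prodMk (measurable_fst.comp measurable_snd))).mul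
      (hgmeas.comp ((measurable_fst.comp measurable_snd).prodMk
        (measurable_snd.comp measurable_snd)))
  have step2 : ∫⁻ p : ℝ × (ℝ × ℝ), g p.1 p.2.1 * g p.2.1 p.2.2
      ≤ ∫⁻ q : ℝ × ℝ, G q.1 * g q.1 q.2 := by
    rw [Measure.volume_eq_prod, lintegral_prod_symm' _ hFmeas]
    refine lintegral_mono fun q => ?_
    calc ∫⁻ x : ℝ, g x q.1 * g q.1 q.2 = (∫⁻ x : ℝ, g x q.1) * g q.1 q.2 :=
          lintegral_mul_const' _ _ (hgtop _ _)
      _ ≤ G q.1 * g q.1 q.2 := mul_le_mul_left (hkey q.1) _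
  have step3 : ∫⁻ q : ℝ × ℝ, G q.1 * g q.1 q.2 ≤ ∫⁻ y : ℝ, G y * G y := by
    have hmeas2 : Measurable (fun q : ℝ × ℝ => G q.1 * g q.1 q.2) := by
      refine Measurable.mul ?_ hgmeas
      apply ENNReal.measurable_ofReal.comp
      exact (measurable_const.div ((measurable_abs.comp measurable_fst).add_const R))
    rw [Measure.volume_eq_prod, lintegral_prod _ hmeas2.aemeasurable]
    refine lintegral_mono fun y => ?_
    calc ∫⁻ z : ℝ, G y * g y z = G y * ∫⁻ z : ℝ, g y z :=
          lintegral_const_mul' _ _ (hGtop _)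
      _ ≤ G y * G y := by
          refine mul_le_mul_right ?_ _
          calc ∫⁻ z : ℝ, g y z = ∫⁻ z : ℝ, g z y := by
                refine lintegral_congr fun z => ?_
                simp only [hg, add_comm]
            _ ≤ G y := hkey y
  have step4 : ∫⁻ y : ℝ, G y * G y = ENNReal.ofReal (32 * R ^ 3) := by
    have heq : ∀ y : ℝ, G y * G y
        = ENNReal.ofReal (16 * R ^ 4) * ENNReal.ofReal (((|y| + R) ^ 2)⁻¹) := by
      intro y
      have hy : (0:ℝ) < |y| + R := by positivity
      rw [hG]
      rw [← ENNReal.ofReal_mul (by positivity), ← ENNReal.ofReal_mul (by positivity)]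
      congr 1
      field_simp
      ring
    simp_rw [heq]
    rw [lintegral_const_mul' _ _ ENNReal.ofReal_ne_top, s14_lint_abs R hR,
      ← ENNReal.ofReal_mul (by positivity)]
    congr 1
    field_simp
    ring
  calc ∫⁻ w, f w = _ := step1
    _ ≤ _ := step2
    _ ≤ _ := step3
    _ = _ := step4

private lemma s14_tri2 (a b c d : ℝ) :
    Real.sqrt ((a + c) ^ 2 + (b + d) ^ 2)
      ≤ Real.sqrt (a ^ 2 + b ^ 2) + Real.sqrt (c ^ 2 + d ^ 2) := by
  have key : a * c + b * d ≤ Real.sqrt (a ^ 2 + b ^ 2) * Real.sqrt (c ^ 2 + d ^ 2) := by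
    rw [← Real.sqrt_mul (by positivity)]
    rcases le_or_gt (a * c + b * d) 0 with h | h
    · exact h.trans (Real.sqrt_nonneg _)
    · rw [Real.le_sqrt h.le (by positivity)]
      nlinarith [sq_nonneg (a * d - b * c)]
  rw [Real.sqrt_le_iff]
  constructor
  · positivity
  · have h1 := Real.sq_sqrt (show (0:ℝ) ≤ a ^ 2 + b ^ 2 by positivity)
    have h2 := Real.sq_sqrt (show (0:ℝ) ≤ c ^ 2 + d ^ 2 by positivity)
    nlinarith

private lemma s14_dist_pair_le (w w' : EuclideanSpace ℝ (Fin 3)) (i j : Fin 3) (hij : i ≠ j) :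
    Real.sqrt ((w i - w' i) ^ 2 + (w j - w' j) ^ 2) ≤ dist w w' := by
  rw [EuclideanSpace.dist_eq]
  apply Real.sqrt_le_sqrt
  have : ({i, j} : Finset (Fin 3)) ⊆ Finset.univ := Finset.subset_univ _
  calc (w i - w' i) ^ 2 + (w j - w' j) ^ 2
      = ∑ k ∈ ({i, j} : Finset (Fin 3)), dist (w k) (w' k) ^ 2 := by
        rw [Finset.sum_pair hij]
        simp [Real.dist_eq, sq_abs]
    _ ≤ ∑ k, dist (w k) (w' k) ^ 2 :=
        Finset.sum_le_sum_of_subset_of_nonneg this (fun k _ _ => by positivity)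

private lemma s14_weight_comp (R : ℝ) (hR : 0 < R) (w : EuclideanSpace ℝ (Fin 3)) (i j : Fin 3)
    (hij : i ≠ j) :
    ((1 + Metric.infDist w
        {w' : EuclideanSpace ℝ (Fin 3) | (w' i) ^ 2 + (w' j) ^ 2 ≤ R ^ 2} / R) ^ (2:ℕ))⁻¹
      ≤ 4 * ((1 + Real.sqrt ((w i) ^ 2 + (w j) ^ 2) / R) ^ (2:ℕ))⁻¹ := by
  set T : Set (EuclideanSpace ℝ (Fin 3)) := {w' | (w' i) ^ 2 + (w' j) ^ 2 ≤ R ^ 2} with hT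
  set D := Metric.infDist w T with hD
  set s := Real.sqrt ((w i) ^ 2 + (w j) ^ 2) with hs
  have hD0 : 0 ≤ D := Metric.infDist_nonneg
  have hs0 : 0 ≤ s := Real.sqrt_nonneg _
  have hTne : T.Nonempty := ⟨0, by simp [hT]; positivity⟩
  have hpt : ∀ y ∈ T, s ≤ dist w y + R := by
    intro y hy
    have h1 : s ≤ Real.sqrt ((w i - y i) ^ 2 + (w j - y j) ^ 2)
        + Real.sqrt ((y i) ^ 2 + (y j) ^ 2) := by
      have := s14_tri2 (w i - y i) (w j - y j) (y i) (y j)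
      simpa using this
    have h2 : Real.sqrt ((y i) ^ 2 + (y j) ^ 2) ≤ R := by
      rw [show R = Real.sqrt (R ^ 2) by rw [Real.sqrt_sq hR.le]]
      exact Real.sqrt_le_sqrt hy
    have h3 := s14_dist_pair_le w y i j hij
    linarith
  have hDs : s - R ≤ D := by
    by_contra hlt
    push_neg at hlt
    obtain ⟨y, hy, hdy⟩ := (Metric.infDist_lt_iff hTne).mp hlt
    have := hpt y hy
    linarith
  have hB2A : 1 + s / R ≤ 2 * (1 + D / R) := by
    rcases le_or_gt s R with h | h
    · have h4 : s / R ≤ 1 := by rw [div_le_one hR]; exact h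
      have h5 : 0 ≤ D / R := by positivity
      linarith
    · have h1 : (s - R) / R ≤ D / R := by gcongr
      have h6 : s / R - 1 ≤ D / R := by rw [sub_div] at h1; field_simp at h1 ⊢; linarith
      have hs1 : 1 ≤ s / R := by rw [le_div_iff₀ hR]; linarith
      linarith
  have hApos : (0:ℝ) < 1 + D / R := by positivity
  have hBpos : (0:ℝ) < 1 + s / R := by positivity
  rw [show (4:ℝ) * ((1 + s / R) ^ (2:ℕ))⁻¹ = 4 / (1 + s / R) ^ 2 by ring,
    show (((1 + D / R) ^ (2:ℕ))⁻¹ : ℝ) = 1 / (1 + D / R) ^ 2 by ring,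
    div_le_div_iff₀ (by positivity) (by positivity)]
  nlinarith

/-- The core computation of Lemma 4.3(iii): the product of two transversal slowly decaying
weights has integral `≲ R³`, and consequently the product of two slowly decaying wave
packets adapted to transversal tubes of radius `R` (one parallel to the `z`-axis, one
parallel to the `x`-axis, through the origin) has `L¹` norm `≲ R`. -/
theorem statement14 :
    (∃ C : ℝ, 0 < C ∧ ∀ R : ℝ, 0 < R →
      ∫⁻ w : EuclideanSpace ℝ (Fin 3),
        ENNReal.ofReal
          (((1 + Real.sqrt ((w 0) ^ 2 + (w 1) ^ 2) / R) ^ (2 : ℕ))⁻¹ *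
            ((1 + Real.sqrt ((w 1) ^ 2 + (w 2) ^ 2) / R) ^ (2 : ℕ))⁻¹) ≤
        ENNReal.ofReal (C * R ^ 3)) ∧
    (∃ C' : ℝ, 0 < C' ∧ ∀ R : ℝ, 0 < R →
      ∀ p1 p2 : EuclideanSpace ℝ (Fin 3) → ℂ,
        (∀ w, ‖p1 w‖ ≤ R⁻¹ *
          ((1 + Metric.infDist w
              {w' : EuclideanSpace ℝ (Fin 3) | (w' 0) ^ 2 + (w' 1) ^ 2 ≤ R ^ 2} / R)
            ^ (2 : ℕ))⁻¹) →
        (∀ w, ‖p2 w‖ ≤ R⁻¹ *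
          ((1 + Metric.infDist w
              {w' : EuclideanSpace ℝ (Fin 3) | (w' 1) ^ 2 + (w' 2) ^ 2 ≤ R ^ 2} / R)
            ^ (2 : ℕ))⁻¹) →
        ∫⁻ w : EuclideanSpace ℝ (Fin 3), ENNReal.ofReal (‖p1 w‖ * ‖p2 w‖) ≤
          ENNReal.ofReal (C' * R)) := by
  constructor
  · exact ⟨32, by norm_num, fun R hR => s14_core R hR⟩
  · refine ⟨512, by norm_num, fun R hR p1 p2 hp1 hp2 => ?_⟩
    set g1 : EuclideanSpace ℝ (Fin 3) → ℝ := fun w =>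
      ((1 + Real.sqrt ((w 0) ^ 2 + (w 1) ^ 2) / R) ^ (2:ℕ))⁻¹ with hg1
    set g2 : EuclideanSpace ℝ (Fin 3) → ℝ := fun w =>
      ((1 + Real.sqrt ((w 1) ^ 2 + (w 2) ^ 2) / R) ^ (2:ℕ))⁻¹ with hg2
    have hg1nn : ∀ w, 0 ≤ g1 w := fun w => by rw [hg1]; positivity
    have hg2nn : ∀ w, 0 ≤ g2 w := fun w => by rw [hg2]; positivity
    have hb1 : ∀ w, ‖p1 w‖ ≤ R⁻¹ * (4 * g1 w) := by
      intro w
      refine (hp1 w).trans ?_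
      have := s14_weight_comp R hR w 0 1 (by decide)
      exact mul_le_mul_of_nonneg_left this (by positivity)
    have hb2 : ∀ w, ‖p2 w‖ ≤ R⁻¹ * (4 * g2 w) := by
      intro w
      refine (hp2 w).trans ?_
      have := s14_weight_comp R hR w 1 2 (by decide)
      exact mul_le_mul_of_nonneg_left this (by positivity)
    have hpt : ∀ w, ‖p1 w‖ * ‖p2 w‖ ≤ 16 * R⁻¹ ^ 2 * (g1 w * g2 w) := by
      intro w
      have := mul_le_mul (hb1 w) (hb2 w) (norm_nonneg _) (by positivity)
      calc ‖p1 w‖ * ‖p2 w‖ ≤ (R⁻¹ * (4 * g1 w)) * (R⁻¹ * (4 * g2 w)) := this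
        _ = 16 * R⁻¹ ^ 2 * (g1 w * g2 w) := by ring
    calc ∫⁻ w : EuclideanSpace ℝ (Fin 3), ENNReal.ofReal (‖p1 w‖ * ‖p2 w‖)
        ≤ ∫⁻ w : EuclideanSpace ℝ (Fin 3),
            ENNReal.ofReal (16 * R⁻¹ ^ 2 * (g1 w * g2 w)) :=
          lintegral_mono fun w => ENNReal.ofReal_le_ofReal (hpt w)
      _ = ENNReal.ofReal (16 * R⁻¹ ^ 2) *
            ∫⁻ w : EuclideanSpace ℝ (Fin 3), ENNReal.ofReal (g1 w * g2 w) := by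
          simp_rw [ENNReal.ofReal_mul (show (0:ℝ) ≤ 16 * R⁻¹ ^ 2 by positivity)]
          exact lintegral_const_mul' _ _ ENNReal.ofReal_ne_top
      _ ≤ ENNReal.ofReal (16 * R⁻¹ ^ 2) * ENNReal.ofReal (32 * R ^ 3) :=
          mul_le_mul_right (s14_core R hR) _
      _ = ENNReal.ofReal (512 * R) := by
          rw [← ENNReal.ofReal_mul (by positivity)]
          congr 1
          field_simp
          ring
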